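/- arXiv:1902.10898 — 3 statements merged into one kernel-verified Lean document; each statement's English description precedes it below -/
import Mathlib

section
/- For all integers x ≥ 1 and m ≥ 2x+2, twice the number of codewords of C(m,x) which start, from the left, with 1^y 0^{x+1} for some y with 2 ≤ y ≤ x+1 (Group 3) is N(m−1,x) − N(m−x−1,x). -/
/-- `noForbidden m x c` says the binary word `c = (c_{m-1}, …, c_0)` contains no contiguous
subword of the form `0 1^y 0` or `1 0^y 1` for any `1 ≤ y ≤ x`. -/
def noForbidden (m x : ℕ) (c : Fin m → Bool) : Prop :=
  ∀ j y : ℕ, 1 ≤ y → y ≤ x → (h : j + y + 1 < m) →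
    ¬ ((∀ k, 1 ≤ k → (hk : k ≤ y) → c ⟨j + k, by omega⟩ = ! c ⟨j, by omega⟩) ∧
        c ⟨j + y + 1, h⟩ = c ⟨j, by omega⟩)

/-- `N(m, x)`: the cardinality of the LOCO code `C(m, x)`. -/
noncomputable def locoN (m x : ℕ) : ℕ := Nat.card {c : Fin m → Bool // noForbidden m x c}

/-- `N(k, x)` extended to integer `k` by the convention `N(k, x) = 2` for `k ≤ 1`. -/
noncomputable def Nex (k : ℤ) (x : ℕ) : ℤ := if k ≤ 1 then 2 else (locoN k.toNat x : ℤ)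

/-- Strict lexicographic order on binary words, comparing bits from `c_{m-1}`
(most significant) down to `c_0`, with `0 < 1`. -/
def lexLt (m : ℕ) (d c : Fin m → Bool) : Prop :=
  ∃ i : Fin m, d i = false ∧ c i = true ∧ ∀ j : Fin m, (i : ℕ) < (j : ℕ) → d j = c j

/-- The index `g(m, x, c)` of a codeword: the number of codewords of `C(m, x)` that
precede `c` in lexicographic order. -/
noncomputable def locoIdx (m x : ℕ) (c : Fin m → Bool) : ℕ :=
  Nat.card {d : Fin m → Bool // noForbidden m x d ∧ lexLt m d c}

lemma bit_congr {M : ℕ} (c : Fin M → Bool) {a b : ℕ} (pa : a < M) (pb : b < M) (h : a = b) :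
    c ⟨a, pa⟩ = c ⟨b, pb⟩ := by subst h; rfl

lemma card_split {α : Type*} [Finite α] (P Q : α → Prop) :
    Nat.card {a // P a} = Nat.card {a // P a ∧ Q a} + Nat.card {a // P a ∧ ¬ Q a} := by
  classical
  rw [← Nat.card_sum]
  refine Nat.card_congr ?_ |>.symm
  exact {
    toFun := Sum.elim (fun a => ⟨a.1, a.2.1⟩) (fun a => ⟨a.1, a.2.1⟩)
    invFun := fun a => if h : Q a.1 then .inl ⟨a.1, a.2, h⟩ else .inr ⟨a.1, a.2, h⟩
    left_inv := by rintro (⟨a, ha, hq⟩ | ⟨a, ha, hq⟩) <;> simp [hq]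
    right_inv := by rintro ⟨a, ha⟩; by_cases h : Q a <;> simp [h] }

/-- restriction preserves noForbidden -/
lemma noF_restrict {x n n' : ℕ} (h : n' ≤ n) {c : Fin n → Bool} (hc : noForbidden n x c) :
    noForbidden n' x (fun i => c ⟨i.1, by omega⟩) := by
  intro j y h1 h2 h3
  exact hc j y h1 h2 (by omega)

def padF {n : ℕ} (t : ℕ) (b : Bool) (c : Fin n → Bool) : Fin (n + t) → Bool :=
  fun i => if h : i.1 < n then c ⟨i.1, h⟩ else b

lemma noF_pad {x n : ℕ} (t : ℕ) {c : Fin (n+1) → Bool} {b' : Bool}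
    (hc : noForbidden (n+1) x c) (hb' : c ⟨n, by omega⟩ = b') :
    noForbidden (n+1+t) x (padF t b' c) := by
  subst hb'
  intro j y h1 h2 h3
  rintro ⟨hA, hB⟩
  set b := c ⟨n, by omega⟩ with hb
  by_cases hcase : j + y + 1 < n + 1
  · refine hc j y h1 h2 hcase ⟨?_, ?_⟩
    · intro k hk1 hk2
      have := hA k hk1 hk2
      simpa [padF, show j + k < n+1 by omega, show j < n+1 by omega] using this
    · have := hB
      simpa [padF, show j + y + 1 < n+1 by omega, show j < n+1 by omega] using this
  · by_cases hj : n ≤ j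
    · -- g j = b, g (j+1) = b
      have e1 : padF t b c ⟨j+1, by omega⟩ = b := by
        by_cases h' : j + 1 < n + 1
        · have : j = n := by omega
          subst this
          simp [padF, h', hb]
        · simp [padF, h']
      have e0 : padF t b c ⟨j, by omega⟩ = b := by
        by_cases h' : j < n + 1
        · have : j = n := by omega
          subst this
          simp [padF, h', hb]
        · simp [padF, h']
      have := hA 1 le_rfl (by omega)
      rw [e1, e0] at this
      simp at this
    · -- j < n ≤ j + y
      have hk0 : 1 ≤ n - j ∧ n - j ≤ y := by omega
      have e1 : padF t b c ⟨j + (n - j), by omega⟩ = b := by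
        simp only [padF, show j + (n-j) < n+1 by omega, dif_pos]
        exact bit_congr c _ _ (by omega)
      have e0 : padF t b c ⟨j, by omega⟩ = c ⟨j, by omega⟩ := by
        simp [padF, show j < n+1 by omega]
      have eB : padF t b c ⟨j + y + 1, h3⟩ = b := by
        simp [padF, show ¬ (j + y + 1 < n + 1) by omega]
      have h1' := hA (n - j) hk0.1 hk0.2
      rw [e1, e0] at h1'
      rw [eB, e0] at hB
      rw [hB] at h1'
      simp at h1'

lemma noF_padflip {x n : ℕ} {b : Bool} {c : Fin n → Bool} (hn : x < n)
    (hc : noForbidden n x c) (htop : ∀ k, k ≤ x → c ⟨n - 1 - k, by omega⟩ = b) :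
    noForbidden (n+1) x (padF 1 (!b) c) := by
  intro j y h1 h2 h3
  rintro ⟨hA, hB⟩
  by_cases hcase : j + y + 1 < n
  · refine hc j y h1 h2 hcase ⟨?_, ?_⟩
    · intro k hk1 hk2
      have := hA k hk1 hk2
      simpa [padF, show j + k < n by omega, show j < n by omega] using this
    · have := hB
      simpa [padF, show j + y + 1 < n by omega, show j < n by omega] using this
  · have hje : j + y + 1 = n := by omega
    have e0 : padF 1 (!b) c ⟨j, by omega⟩ = b := by
      have := htop y h2
      simp only [padF, show j < n by omega, dif_pos]
      rw [bit_congr c _ (by omega : n - 1 - y < n) (by omega)]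
      exact this
    have eB : padF 1 (!b) c ⟨j + y + 1, h3⟩ = !b := by
      simp [padF, show ¬ (j + y + 1 < n) by omega]
    rw [eB, e0] at hB
    simp at hB

lemma forcing {x n : ℕ} {c : Fin n → Bool} (hc : noForbidden n x c) {p : ℕ} {b : Bool}
    (hpn : p + 1 < n) (hpx : x ≤ p)
    (h1 : c ⟨p+1, hpn⟩ = b) (h0 : c ⟨p, by omega⟩ = !b) :
    ∀ k, k ≤ x → c ⟨p - k, by omega⟩ = !b := by
  intro k
  induction k using Nat.strong_induction_on with
  | _ k ih =>
    intro hk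
    match k with
    | 0 => exact h0
    | (k+1) =>
      by_contra hne
      have hcb : c ⟨p - (k+1), by omega⟩ = b := by
        cases hv : c ⟨p - (k+1), by omega⟩ <;> cases b <;> simp_all
      refine hc (p - (k+1)) (k+1) (by omega) hk (by omega) ⟨?_, ?_⟩
      · intro i hi1 hi2
        rw [show c ⟨p - (k+1), by omega⟩ = b from hcb]
        rcases Nat.lt_or_ge i (k+1) with hik | hik
        · have := ih (k+1-i) (by omega) (by omega)
          rw [bit_congr c _ (by omega : p - (k+1-i) < n) (by omega)]
          exact this
        · have : i = k+1 := by omega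
          subst this
          rw [bit_congr c _ (by omega : p < n) (by omega)]
          exact h0
      · rw [bit_congr c _ hpn (by omega), h1, hcb]

-- complement
lemma noF_compl {x n : ℕ} {c : Fin n → Bool} (hc : noForbidden n x c) :
    noForbidden n x (fun i => !(c i)) := by
  intro j y h1 h2 h3
  rintro ⟨hA, hB⟩
  refine hc j y h1 h2 h3 ⟨?_, ?_⟩
  · intro k hk1 hk2
    have := hA k hk1 hk2
    simpa using this
  · have := hB
    simpa using this

lemma card_top_compl (x n : ℕ) :
    Nat.card {c : Fin (n+1) → Bool // noForbidden (n+1) x c ∧ c ⟨n, by omega⟩ = true}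
    = Nat.card {c : Fin (n+1) → Bool // noForbidden (n+1) x c ∧ c ⟨n, by omega⟩ = false} := by
  refine Nat.card_congr {
    toFun := fun c => ⟨fun i => !(c.1 i), noF_compl c.2.1, by simp [c.2.2]⟩
    invFun := fun c => ⟨fun i => !(c.1 i), noF_compl c.2.1, by simp [c.2.2]⟩
    left_inv := by rintro ⟨c, hc⟩; ext i; simp
    right_inv := by rintro ⟨c, hc⟩; ext i; simp }


lemma locoN_two_top (x n : ℕ) :
    locoN (n+1) x
    = 2 * Nat.card {c : Fin (n+1) → Bool // noForbidden (n+1) x c ∧ c ⟨n, by omega⟩ = true} := by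
  rw [locoN, card_split (noForbidden (n+1) x) (fun c => c ⟨n, by omega⟩ = true)]
  rw [show (Nat.card {c : Fin (n+1) → Bool // noForbidden (n+1) x c ∧ ¬ c ⟨n, by omega⟩ = true})
      = Nat.card {c : Fin (n+1) → Bool // noForbidden (n+1) x c ∧ c ⟨n, by omega⟩ = false} from
      Nat.card_congr (Equiv.subtypeEquivRight (fun c => by simp))]
  rw [← card_top_compl]
  ring

lemma locoN_two_top' (x n : ℕ) (b : Bool) :
    locoN (n+1) x
    = 2 * Nat.card {c : Fin (n+1) → Bool // noForbidden (n+1) x c ∧ c ⟨n, by omega⟩ = b} := by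
  cases b
  · rw [locoN_two_top x n, card_top_compl]
  · exact locoN_two_top x n


lemma card_eqtop (x n : ℕ) :
    Nat.card {c : Fin (n+2) → Bool // noForbidden (n+2) x c ∧ c ⟨n+1, by omega⟩ = c ⟨n, by omega⟩}
    = locoN (n+1) x := by
  refine Nat.card_congr {
    toFun := fun c => ⟨fun i => c.1 ⟨i.1, by omega⟩, noF_restrict (by omega) c.2.1⟩
    invFun := fun d => ⟨padF 1 (d.1 ⟨n, by omega⟩) d.1, noF_pad 1 d.2 rfl, by simp [padF]⟩
    left_inv := ?_
    right_inv := ?_ }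
  · rintro ⟨c, hc, htop⟩
    ext i
    rcases Nat.lt_or_ge i.1 (n+1) with h | h
    · simp only [padF, h, dif_pos]
    · have hi : i.1 = n + 1 := by omega
      simp only [padF, show ¬ (i.1 < n+1) by omega, dif_neg, not_false_iff]
      rw [← htop]
      exact (bit_congr c _ _ hi).symm
  · rintro ⟨d, hd⟩
    ext i
    simp only [padF]
    rw [dif_pos i.2]

lemma card_ones (x n t : ℕ) (b : Bool) :
    Nat.card {c : Fin (n+1+t) → Bool // noForbidden (n+1+t) x c ∧
        ∀ k, k ≤ t → c ⟨n+t-k, by omega⟩ = b}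
    = Nat.card {d : Fin (n+1) → Bool // noForbidden (n+1) x d ∧ d ⟨n, by omega⟩ = b} := by
  refine Nat.card_congr {
    toFun := fun c => ⟨fun i => c.1 ⟨i.1, by omega⟩, noF_restrict (by omega) c.2.1, ?_⟩
    invFun := fun d => ⟨padF t b d.1, noF_pad t d.2.1 d.2.2, ?_⟩
    left_inv := ?_
    right_inv := ?_ }
  · have := c.2.2 t le_rfl
    rw [bit_congr c.1 _ (by omega : n < n+1+t) (by omega)] at this
    exact this
  · intro k hk
    rcases Nat.lt_or_ge (n+t-k) (n+1) with h | h
    · have : n + t - k = n := by omega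
      simp only [padF, h, dif_pos]
      rw [bit_congr d.1 _ (by omega : n < n+1) this]
      exact d.2.2
    · simp [padF, show ¬ (n+t-k < n+1) by omega]
  · rintro ⟨c, hc, htop⟩
    ext i
    rcases Nat.lt_or_ge i.1 (n+1) with h | h
    · simp only [padF, h, dif_pos]
    · simp only [padF, show ¬ (i.1 < n+1) by omega, dif_neg, not_false_iff]
      have := htop (n+t-i.1) (by omega)
      rw [bit_congr c _ (by omega : i.1 < n+1+t) (by omega : n+t-(n+t-i.1) = i.1)] at this
      exact this.symm
  · rintro ⟨d, hd⟩
    ext i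
    simp only [padF]
    rw [dif_pos i.2]

lemma card_flip (x n : ℕ) (b : Bool) :
    Nat.card {c : Fin (n+1+x+1) → Bool // noForbidden (n+1+x+1) x c ∧
        c ⟨n+1+x, by omega⟩ = !b ∧ ∀ k, 1 ≤ k → k ≤ x+1 → c ⟨n+1+x-k, by omega⟩ = b}
    = Nat.card {d : Fin (n+1) → Bool // noForbidden (n+1) x d ∧ d ⟨n, by omega⟩ = b} := by
  refine Nat.card_congr {
    toFun := fun c => ⟨fun i => c.1 ⟨i.1, by omega⟩, noF_restrict (by omega) c.2.1, ?_⟩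
    invFun := fun d => ⟨padF 1 (!b) (padF x b d.1), ?_, ?_, ?_⟩
    left_inv := ?_
    right_inv := ?_ }
  · have := c.2.2.2 (x+1) (by omega) le_rfl
    rw [bit_congr c.1 _ (by omega : n < n+1+x+1) (by omega)] at this
    exact this
  · refine noF_padflip (by omega) (noF_pad x d.2.1 d.2.2) ?_
    intro k hk
    rcases Nat.lt_or_ge (n+1+x-1-k) (n+1) with h | h
    · have : n+1+x-1-k = n := by omega
      simp only [padF, h, dif_pos]
      rw [bit_congr d.1 _ (by omega : n < n+1) this]
      exact d.2.2
    · simp only [padF, dite_eq_right_iff]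
      intro h'
      exact absurd h' (by omega)
  · simp [padF]
  · intro k hk1 hk2
    have h1 : n+1+x-k < n+1+x := by omega
    simp only [padF, h1, dif_pos]
    rcases Nat.lt_or_ge (n+1+x-k) (n+1) with h | h
    · have : n+1+x-k = n := by omega
      simp only [h, dif_pos]
      rw [bit_congr d.1 _ (by omega : n < n+1) this]
      exact d.2.2
    · simp [show ¬ (n+1+x-k < n+1) by omega]
  · rintro ⟨c, hc, htop, hrun⟩
    ext i
    rcases Nat.lt_or_ge i.1 (n+1) with h | h
    · simp only [padF, show i.1 < n+1+x by omega, dif_pos, h]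
    · rcases Nat.lt_or_ge i.1 (n+1+x) with h' | h'
      · simp only [padF, h', dif_pos, show ¬ (i.1 < n+1) by omega, dif_neg, not_false_iff]
        have := hrun (n+1+x-i.1) (by omega) (by omega)
        rw [bit_congr c _ (by omega : i.1 < n+1+x+1) (by omega : n+1+x-(n+1+x-i.1) = i.1)] at this
        exact this.symm
      · have hi : i.1 = n+1+x := by omega
        simp only [padF, show ¬ (i.1 < n+1+x) by omega, dif_neg, not_false_iff]
        rw [← htop]
        exact (bit_congr c _ _ hi).symm
  · rintro ⟨d, hd⟩
    ext i
    simp only [padF]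
    rw [dif_pos (show i.1 < n+1+x by omega), dif_pos i.2]

-- ############ wrappers ############

lemma locoN_top (x M : ℕ) (h : 1 ≤ M) (b : Bool) :
    locoN M x
    = 2 * Nat.card {c : Fin M → Bool // noForbidden M x c ∧ c ⟨M-1, by omega⟩ = b} := by
  obtain ⟨n, rfl⟩ : ∃ n, M = n + 1 := ⟨M - 1, by omega⟩
  exact locoN_two_top' x n b

lemma card_eqtop' (x M : ℕ) (h : 2 ≤ M) :
    Nat.card {c : Fin M → Bool // noForbidden M x c ∧ c ⟨M-1, by omega⟩ = c ⟨M-2, by omega⟩}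
    = locoN (M-1) x := by
  obtain ⟨n, rfl⟩ : ∃ n, M = n + 2 := ⟨M - 2, by omega⟩
  exact card_eqtop x n

lemma card_ones' (x M t : ℕ) (h : t + 1 ≤ M) (b : Bool) :
    2 * Nat.card {c : Fin M → Bool // noForbidden M x c ∧
        ∀ k, k ≤ t → c ⟨M-1-k, by omega⟩ = b}
    = locoN (M-t) x := by
  obtain ⟨n, rfl⟩ : ∃ n, M = n + 1 + t := ⟨M - t - 1, by omega⟩
  rw [show n+1+t-t = n+1 from by omega, locoN_two_top' x n b, ← card_ones x n t b]
  refine congrArg (HMul.hMul 2) (Nat.card_congr (Equiv.subtypeEquivRight (fun c => ?_)))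
  constructor
  · rintro ⟨hc, hk⟩
    refine ⟨hc, fun k hkt => ?_⟩
    rw [bit_congr c (by omega) (by omega) (by omega : n+t-k = n+1+t-1-k)]
    exact hk k hkt
  · rintro ⟨hc, hk⟩
    refine ⟨hc, fun k hkt => ?_⟩
    rw [bit_congr c (by omega) (by omega) (by omega : n+1+t-1-k = n+t-k)]
    exact hk k hkt

lemma card_flip' (x M : ℕ) (h : x + 2 ≤ M) (b : Bool) :
    2 * Nat.card {c : Fin M → Bool // noForbidden M x c ∧
        c ⟨M-1, by omega⟩ = !b ∧ ∀ k, 1 ≤ k → k ≤ x+1 → c ⟨M-1-k, by omega⟩ = b}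
    = locoN (M-x-1) x := by
  obtain ⟨n, rfl⟩ : ∃ n, M = n + 1 + x + 1 := ⟨M - x - 2, by omega⟩
  rw [show n+1+x+1-x-1 = n+1 from by omega, locoN_two_top' x n b]
  exact congrArg (HMul.hMul 2) (card_flip x n b)

-- ############ recursion ############

lemma neq_top_A (x M : ℕ) (h : x + 2 ≤ M) :
    Nat.card {c : Fin M → Bool // (noForbidden M x c ∧
        ¬ c ⟨M-1, by omega⟩ = c ⟨M-2, by omega⟩) ∧ c ⟨M-1, by omega⟩ = true}
      = Nat.card {c : Fin M → Bool // noForbidden M x c ∧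
        c ⟨M-1, by omega⟩ = !false ∧ ∀ k, 1 ≤ k → k ≤ x+1 → c ⟨M-1-k, by omega⟩ = false} := by
    refine Nat.card_congr (Equiv.subtypeEquivRight (fun c => ?_))
    constructor
    · rintro ⟨⟨hc, hne⟩, htop⟩
      refine ⟨hc, by simpa using htop, fun k hk1 hk2 => ?_⟩
      have h2 : c ⟨M-2, by omega⟩ = false := by
        cases hv : c ⟨M-2, by omega⟩
        · rfl
        · exact absurd (htop.trans hv.symm) hne
      have hf := forcing hc (p := M-2) (b := true) (by omega) (by omega)
        (by rw [bit_congr c (by omega) (by omega) (by omega : M-2+1 = M-1)]; exact htop)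
        (by simpa using h2) (k-1) (by omega)
      rw [bit_congr c (by omega) (by omega) (by omega : M-1-k = M-2-(k-1))]
      simpa using hf
    · rintro ⟨hc, htop, hk⟩
      have h1 := hk 1 le_rfl (by omega)
      have htop' : c ⟨M-1, by omega⟩ = true := by simpa using htop
      refine ⟨⟨hc, ?_⟩, htop'⟩
      rw [bit_congr c (by omega) (by omega) (by omega : M-1-1 = M-2)] at h1
      rw [h1, htop']
      simp

lemma neq_top_B (x M : ℕ) (h : x + 2 ≤ M) :
    Nat.card {c : Fin M → Bool // (noForbidden M x c ∧
        ¬ c ⟨M-1, by omega⟩ = c ⟨M-2, by omega⟩) ∧ ¬ c ⟨M-1, by omega⟩ = true}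
      = Nat.card {c : Fin M → Bool // noForbidden M x c ∧
        c ⟨M-1, by omega⟩ = !true ∧ ∀ k, 1 ≤ k → k ≤ x+1 → c ⟨M-1-k, by omega⟩ = true} := by
    refine Nat.card_congr (Equiv.subtypeEquivRight (fun c => ?_))
    constructor
    · rintro ⟨⟨hc, hne⟩, htop⟩
      have htop' : c ⟨M-1, by omega⟩ = false := by simpa using htop
      refine ⟨hc, by simpa using htop', fun k hk1 hk2 => ?_⟩
      have h2 : c ⟨M-2, by omega⟩ = true := by
        cases hv : c ⟨M-2, by omega⟩
        · exact absurd (htop'.trans hv.symm) hne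
        · rfl
      have hf := forcing hc (p := M-2) (b := false) (by omega) (by omega)
        (by rw [bit_congr c (by omega) (by omega) (by omega : M-2+1 = M-1)]; exact htop')
        (by simpa using h2) (k-1) (by omega)
      rw [bit_congr c (by omega) (by omega) (by omega : M-1-k = M-2-(k-1))]
      simpa using hf
    · rintro ⟨hc, htop, hk⟩
      have h1 := hk 1 le_rfl (by omega)
      have htop' : c ⟨M-1, by omega⟩ = false := by simpa using htop
      refine ⟨⟨hc, ?_⟩, by simp [htop']⟩
      rw [bit_congr c (by omega) (by omega) (by omega : M-1-1 = M-2)] at h1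
      rw [h1, htop']
      simp

lemma locoN_rec (x M : ℕ) (h : x + 2 ≤ M) (hx : 1 ≤ x) :
    locoN M x = locoN (M-1) x + locoN (M-x-1) x := by
  have hM2 : 2 ≤ M := by omega
  have p1 : M - 1 < M := by omega
  have p2 : M - 2 < M := by omega
  have p3 : ∀ k : ℕ, M - 1 - k < M := fun k => by omega
  have hA := neq_top_A x M h
  have hB := neq_top_B x M h
  have h2A := card_flip' x M h false
  have h2B := card_flip' x M h true
  have hEq := card_eqtop' x M hM2
  have hsplit := card_split (noForbidden M x)
    (fun c => c ⟨M-1, p1⟩ = c ⟨M-2, p2⟩)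
  have hsplit2 := card_split (fun c : Fin M → Bool =>
      noForbidden M x c ∧ ¬ c ⟨M-1, p1⟩ = c ⟨M-2, p2⟩)
    (fun c => c ⟨M-1, p1⟩ = true)
  rw [hA, hB] at hsplit2
  have hstart : locoN M x = Nat.card {a : Fin M → Bool // noForbidden M x a} := rfl
  rw [hstart, hsplit, hEq, hsplit2]
  have hsum : Nat.card {c : Fin M → Bool // noForbidden M x c ∧
        c ⟨M-1, p1⟩ = !false ∧ ∀ k, 1 ≤ k → k ≤ x+1 → c ⟨M-1-k, p3 k⟩ = false}
      + Nat.card {c : Fin M → Bool // noForbidden M x c ∧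
        c ⟨M-1, p1⟩ = !true ∧ ∀ k, 1 ≤ k → k ≤ x+1 → c ⟨M-1-k, p3 k⟩ = true}
      = locoN (M-x-1) x := by
    refine Nat.eq_of_mul_eq_mul_left (show 0 < 2 from by norm_num) ?_
    rw [Nat.mul_add]
    rw [h2A, h2B, Nat.two_mul]
  rw [hsum]

-- ########## congruence lemmas for the main proof ##########

lemma congr_ones (x m : ℕ) (hx : 1 ≤ x) (hm : 2 * x + 2 ≤ m) :
    Nat.card {c : Fin m → Bool // (noForbidden m x c ∧ c ⟨m-1, by omega⟩ = true) ∧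
        ∀ k, 1 ≤ k → k ≤ x+1 → c ⟨m-1-k, by omega⟩ = true}
    = Nat.card {c : Fin m → Bool // noForbidden m x c ∧
        ∀ k, k ≤ x+1 → c ⟨m-1-k, by omega⟩ = true} := by
  refine Nat.card_congr (Equiv.subtypeEquivRight (fun c => ?_))
  constructor
  · rintro ⟨⟨hc, htop⟩, hk⟩
    refine ⟨hc, fun k hkx => ?_⟩
    match k with
    | 0 => exact htop
    | (k+1) => exact hk (k+1) (by omega) hkx
  · rintro ⟨hc, hk⟩
    exact ⟨⟨hc, hk 0 (by omega)⟩, fun k hk1 hk2 => hk k hk2⟩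

lemma congr_T1 (x m : ℕ) (hx : 1 ≤ x) (hm : 2 * x + 2 ≤ m) :
    Nat.card {c : Fin m → Bool // ((noForbidden m x c ∧ c ⟨m-1, by omega⟩ = true) ∧
        ¬ ∀ k, 1 ≤ k → k ≤ x+1 → c ⟨m-1-k, by omega⟩ = true) ∧ c ⟨m-1-1, by omega⟩ = false}
    = Nat.card {c : Fin m → Bool // noForbidden m x c ∧
        c ⟨m-1, by omega⟩ = !false ∧ ∀ k, 1 ≤ k → k ≤ x+1 → c ⟨m-1-k, by omega⟩ = false} := by
  refine Nat.card_congr (Equiv.subtypeEquivRight (fun c => ?_))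
  constructor
  · rintro ⟨⟨⟨hc, htop⟩, _⟩, hb1⟩
    refine ⟨hc, by simpa using htop, fun k hk1 hk2 => ?_⟩
    have hf := forcing hc (p := m-2) (b := true) (by omega) (by omega)
      (by rw [bit_congr c (by omega) (by omega) (by omega : m-2+1 = m-1)]; exact htop)
      (by rw [bit_congr c (by omega) (by omega) (by omega : m-2 = m-1-1)]; simpa using hb1)
      (k-1) (by omega)
    rw [bit_congr c (by omega) (by omega) (by omega : m-1-k = m-2-(k-1))]
    simpa using hf
  · rintro ⟨hc, htop, hall⟩
    have htop' : c ⟨m-1, by omega⟩ = true := by simpa using htop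
    have h1 := hall 1 le_rfl (by omega)
    refine ⟨⟨⟨hc, htop'⟩, fun hR => ?_⟩, h1⟩
    have := hR 1 le_rfl (by omega)
    rw [this] at h1
    simp at h1

lemma congr_G3 (x m : ℕ) (hx : 1 ≤ x) (hm : 2 * x + 2 ≤ m) :
    Nat.card {c : Fin m → Bool // ((noForbidden m x c ∧ c ⟨m-1, by omega⟩ = true) ∧
        ¬ ∀ k, 1 ≤ k → k ≤ x+1 → c ⟨m-1-k, by omega⟩ = true) ∧ ¬ c ⟨m-1-1, by omega⟩ = false}
    = Nat.card {c : Fin m → Bool // noForbidden m x c ∧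
          ∃ y, 2 ≤ y ∧ y ≤ x + 1 ∧
            (∀ k, k < y → c ⟨m - 1 - k, by omega⟩ = true) ∧
            (∀ k, y ≤ k → k ≤ y + x → c ⟨m - 1 - k, by omega⟩ = false)} := by
  classical
  refine Nat.card_congr (Equiv.subtypeEquivRight (fun c => ?_))
  constructor
  · rintro ⟨⟨⟨hc, htop⟩, hnR⟩, hb1⟩
    have hb1' : c ⟨m-1-1, by omega⟩ = true := by
      cases hv : c ⟨m-1-1, by omega⟩
      · exact absurd hv hb1
      · rfl
    have hex : ∃ k, 1 ≤ k ∧ k ≤ x+1 ∧ c ⟨m-1-k, by omega⟩ = false := by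
      by_contra hno
      push_neg at hno
      refine hnR (fun k hk1 hk2 => ?_)
      have := hno k hk1 hk2
      cases hv : c ⟨m-1-k, by omega⟩
      · exact absurd hv this
      · rfl
    set Y := Nat.find hex with hY
    obtain ⟨hy1, hy2, hy3⟩ := Nat.find_spec hex
    have hYge2 : 2 ≤ Y := by
      rcases Nat.lt_or_ge Y 2 with h2 | h2
      · have hy1' : Y = 1 := by omega
        rw [bit_congr c (by omega) (by omega) (by omega : m-1-Y = m-1-1), hb1'] at hy3
        exact absurd hy3 (by simp)
      · exact h2
    have hones : ∀ k, k < Y → c ⟨m-1-k, by omega⟩ = true := by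
      intro k hk
      match k with
      | 0 => exact htop
      | (k+1) =>
        by_contra hkf
        have hkf' : c ⟨m-1-(k+1), by omega⟩ = false := by
          cases hv : c ⟨m-1-(k+1), by omega⟩
          · rfl
          · exact absurd hv hkf
        exact Nat.find_min hex hk ⟨by omega, by omega, hkf'⟩
    refine ⟨hc, Y, hYge2, hy2, hones, ?_⟩
    intro k hky hkyx
    have hf := forcing hc (p := m-1-Y) (b := true) (by omega) (by omega)
      (by rw [bit_congr c (by omega) (by omega) (by omega : m-1-Y+1 = m-1-(Y-1))]
          exact hones (Y-1) (by omega))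
      (by simpa using hy3)
      (k - Y) (by omega)
    rw [bit_congr c (by omega) (by omega) (by omega : m-1-k = m-1-Y-(k-Y))]
    simpa using hf
  · rintro ⟨hc, y, hy2, hyx, hones, hzeros⟩
    have htop : c ⟨m-1, by omega⟩ = true := hones 0 (by omega)
    have hb1 : c ⟨m-1-1, by omega⟩ = true := hones 1 (by omega)
    refine ⟨⟨⟨hc, htop⟩, fun hR => ?_⟩, by simp [hb1]⟩
    have ht := hR y (by omega) (by omega)
    have hf := hzeros y le_rfl (by omega)
    rw [ht] at hf
    simp at hf

/-- For all `x ≥ 1` and `m ≥ 2x + 2`, twice the number of codewords of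
`C(m, x)` starting from the left with `1^y 0^{x+1}` for some `2 ≤ y ≤ x + 1` (Group 3)
is `N(m - 1, x) - N(m - x - 1, x)`. -/
theorem loco_group3_card (m x : ℕ) (hx : 1 ≤ x) (hm : 2 * x + 2 ≤ m) :
    2 * (Nat.card {c : Fin m → Bool // noForbidden m x c ∧
          ∃ y, 2 ≤ y ∧ y ≤ x + 1 ∧
            (∀ k, k < y → c ⟨m - 1 - k, by omega⟩ = true) ∧
            (∀ k, y ≤ k → k ≤ y + x → c ⟨m - 1 - k, by omega⟩ = false)} : ℤ)
      = Nex ((m : ℤ) - 1) x - Nex ((m : ℤ) - (x : ℤ) - 1) x := by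
  have harith1 : x + 2 ≤ m := by omega
  have harith2 : (x + 1) + 1 ≤ m := by omega
  have hM1 : 1 ≤ m := by omega
  have p1 : m - 1 < m := by omega
  have p3 : ∀ k : ℕ, m - 1 - k < m := fun k => by omega
  have hsub : m - (x + 1) = m - x - 1 := by omega
  have ht1 : ((m:ℤ) - 1).toNat = m - 1 := by omega
  have ht2 : ((m:ℤ) - (x:ℤ) - 1).toNat = m - x - 1 := by omega
  have hNex1 : Nex ((m : ℤ) - 1) x = (locoN (m-1) x : ℤ) := by
    rw [Nex, if_neg (by omega), ht1]
  have hNex2 : Nex ((m : ℤ) - (x:ℤ) - 1) x = (locoN (m-x-1) x : ℤ) := by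
    rw [Nex, if_neg (by omega), ht2]
  have e1 := locoN_rec x m harith1 hx
  have d1 := locoN_top x m hM1 true
  have split1 := card_split
    (fun c : Fin m → Bool => noForbidden m x c ∧ c ⟨m-1, p1⟩ = true)
    (fun c => ∀ k, 1 ≤ k → k ≤ x+1 → c ⟨m-1-k, p3 k⟩ = true)
  have split2 := card_split
    (fun c : Fin m → Bool => (noForbidden m x c ∧ c ⟨m-1, p1⟩ = true) ∧
      ¬ ∀ k, 1 ≤ k → k ≤ x+1 → c ⟨m-1-k, p3 k⟩ = true)
    (fun c => c ⟨m-1-1, p3 1⟩ = false)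
  have cOnes := congr_ones x m hx hm
  have cT1 := congr_T1 x m hx hm
  have cG3 := congr_G3 x m hx hm
  have dOnes := card_ones' x m (x+1) harith2 true
  have dT1 := card_flip' x m harith1 false
  rw [hsub] at dOnes
  rw [split1, split2, cOnes, cT1, cG3] at d1
  rw [Nat.mul_add, Nat.mul_add, dOnes, dT1] at d1
  have dZ := congrArg (fun t : ℕ => (t : ℤ)) d1
  have eZ := congrArg (fun t : ℕ => (t : ℤ)) e1
  push_cast at dZ eZ
  rw [hNex1, hNex2]
  linarith [dZ, eZ]
end

section
/- For all integers x ≥ 1 and m ≥ x+2, twice the number of codewords of C(m,x) whose x+2 leftmost bits are 1 followed by x+1 zeros (i.e., codewords starting with 1 0^{x+1} from the left, Group 4) is N(m−x−1,x). -/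
/-! ### Auxiliary material -/

/-- Extend a word of length `t` (low bits) to length `m` by padding with zeros, except a
single one at the top position `m - 1`. -/
def extWord (m t : ℕ) (s : Fin t → Bool) : Fin m → Bool :=
  fun i => if h : (i : ℕ) < t then s ⟨i, h⟩ else decide ((i : ℕ) = m - 1)

lemma extWord_lt {m t : ℕ} (s : Fin t → Bool) {i : Fin m} (h : (i : ℕ) < t) :
    extWord m t s i = s ⟨i, h⟩ := dif_pos h

lemma extWord_ge {m t : ℕ} (s : Fin t → Bool) {i : Fin m} (h : ¬ (i : ℕ) < t) :
    extWord m t s i = decide ((i : ℕ) = m - 1) := dif_neg h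

lemma noForbidden_one (x : ℕ) (c : Fin 1 → Bool) : noForbidden 1 x c := by
  intro j y hy _ h
  omega

lemma locoN_one (x : ℕ) : locoN 1 x = 2 := by
  rw [locoN, Nat.card_congr (Equiv.subtypeUnivEquiv (noForbidden_one x))]
  simp [Nat.card_eq_fintype_card]

lemma noForbidden_not {m x : ℕ} {c : Fin m → Bool} (h : noForbidden m x c) :
    noForbidden m x (fun i => ! c i) := by
  intro j y hy1 hyx hlt hpat
  refine h j y hy1 hyx hlt ⟨fun k hk1 hk2 => ?_, ?_⟩
  · have := hpat.1 k hk1 hk2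
    simp only [Bool.not_not] at this
    exact Bool.not_inj (by simpa using this)
  · exact Bool.not_inj hpat.2

/-- Complement bijection between codewords with top bit `true` and top bit `false`. -/
noncomputable def complEquiv (t x : ℕ) (ht : 1 ≤ t) :
    {s : Fin t → Bool // noForbidden t x s ∧ s ⟨t - 1, by omega⟩ = true} ≃
    {s : Fin t → Bool // noForbidden t x s ∧ s ⟨t - 1, by omega⟩ = false} where
  toFun s := ⟨fun i => ! s.1 i, noForbidden_not s.2.1, by simp [s.2.2]⟩
  invFun s := ⟨fun i => ! s.1 i, noForbidden_not s.2.1, by simp [s.2.2]⟩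
  left_inv s := by ext i; simp
  right_inv s := by ext i; simp

lemma locoN_split (t x : ℕ) (ht : 1 ≤ t) :
    locoN t x = 2 * Nat.card {s : Fin t → Bool // noForbidden t x s ∧
      s ⟨t - 1, by omega⟩ = false} := by
  classical
  rw [locoN]
  have e1 : {s : Fin t → Bool // noForbidden t x s} ≃
      {a : {s : Fin t → Bool // noForbidden t x s} // a.1 ⟨t - 1, by omega⟩ = true} ⊕
      {a : {s : Fin t → Bool // noForbidden t x s} // ¬ a.1 ⟨t - 1, by omega⟩ = true} :=
    (Equiv.sumCompl _).symm
  rw [Nat.card_congr e1, Nat.card_sum]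
  have e2 := Equiv.subtypeSubtypeEquivSubtypeInter (fun s : Fin t → Bool => noForbidden t x s)
      (fun s => s ⟨t - 1, by omega⟩ = true)
  have e3 : {a : {s : Fin t → Bool // noForbidden t x s} // ¬ a.1 ⟨t - 1, by omega⟩ = true} ≃
      {s : Fin t → Bool // noForbidden t x s ∧ s ⟨t - 1, by omega⟩ = false} :=
    (Equiv.subtypeSubtypeEquivSubtypeInter (fun s : Fin t → Bool => noForbidden t x s)
      (fun s => ¬ s ⟨t - 1, by omega⟩ = true)).trans
      (Equiv.subtypeEquivRight (fun s => by simp))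
  rw [Nat.card_congr e2, Nat.card_congr e3,
    Nat.card_congr (complEquiv t x ht)]
  ring

/-- The restriction / extension bijection between Group 4 of `C(m,x)` and the
codewords of `C(m-x-1, x)` with top bit `false`. -/
lemma group4_eq (m x : ℕ) (hx : 1 ≤ x) (hm : x + 2 ≤ m) :
    Nat.card {c : Fin m → Bool // noForbidden m x c ∧
          c ⟨m - 1, by clear hx; omega⟩ = true ∧
          ∀ k, 1 ≤ k → k ≤ x + 1 → c ⟨m - 1 - k, by clear hx; omega⟩ = false}
      = Nat.card {s : Fin (m - x - 1) → Bool // noForbidden (m - x - 1) x s ∧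
          s ⟨m - x - 1 - 1, by omega⟩ = false} := by
  set t := m - x - 1 with htdef
  have htm : t ≤ m := by omega
  have ht1 : 1 ≤ t := by omega
  refine Nat.card_congr ?_
  refine
    { toFun := fun c => ⟨fun i => c.1 ⟨i, lt_of_lt_of_le i.isLt htm⟩, ?_, ?_⟩
      invFun := fun s => ⟨extWord m t s.1, ?_, ?_, ?_⟩
      left_inv := ?_
      right_inv := ?_ }
  · -- restriction satisfies noForbidden
    intro j y hy1 hyx h hpat
    exact c.2.1 j y hy1 hyx (by omega) ⟨fun k hk1 hk2 => hpat.1 k hk1 hk2, hpat.2⟩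
  · -- restriction has top bit false
    have h2 := c.2.2.2 (x + 1) (by omega) le_rfl
    have hfin : (⟨(⟨t - 1, by omega⟩ : Fin t).1, lt_of_lt_of_le (⟨t - 1, by omega⟩ : Fin t).isLt htm⟩ : Fin m)
        = ⟨m - 1 - (x + 1), by omega⟩ := by
      simp only [Fin.mk.injEq]
      omega
    show c.1 _ = false
    rw [hfin]
    exact h2
  · -- extension satisfies noForbidden
    intro j y hy1 hyx h hpat
    obtain ⟨h1, h2⟩ := hpat
    by_cases hcase : j + y + 1 < t
    · refine s.2.1 j y hy1 hyx hcase ⟨fun k hk1 hk2 => ?_, ?_⟩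
      · have := h1 k hk1 hk2
        rwa [extWord_lt s.1 (show ((⟨j + k, by omega⟩ : Fin m) : ℕ) < t by first | omega | (simp; omega)),
          extWord_lt s.1 (show ((⟨j, by omega⟩ : Fin m) : ℕ) < t by first | omega | (simp; omega))] at this
      · have := h2
        rwa [extWord_lt s.1 (show ((⟨j + y + 1, h⟩ : Fin m) : ℕ) < t by first | omega | (simp; omega)),
          extWord_lt s.1 (show ((⟨j, by omega⟩ : Fin m) : ℕ) < t by first | omega | (simp; omega))] at this
    · by_cases he : j + y + 1 = m - 1
      · -- then c j = true, but position j is in the zero region or is s's top bit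
        have h2' : extWord m t s.1 ⟨j + y + 1, h⟩ = true := by
          rw [extWord_ge s.1 (show ¬ ((⟨j + y + 1, h⟩ : Fin m) : ℕ) < t by first | omega | (simp; omega))]
          simp [he]
        have hcj : extWord m t s.1 ⟨j, by omega⟩ = true := by rw [← h2]; exact h2'
        by_cases hj : j < t
        · have hj' : j = t - 1 := by omega
          rw [extWord_lt s.1 (show ((⟨j, by omega⟩ : Fin m) : ℕ) < t by simpa using hj)] at hcj
          have hfin : (⟨j, by simpa using hj⟩ : Fin t) = ⟨t - 1, by omega⟩ := by
            simp only [Fin.mk.injEq]; omega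
          rw [hfin] at hcj
          rw [s.2.2] at hcj
          exact Bool.false_ne_true hcj
        · rw [extWord_ge s.1 (show ¬ ((⟨j, by omega⟩ : Fin m) : ℕ) < t by simpa using hj)] at hcj
          simp only [decide_eq_true_eq] at hcj
          omega
      · -- c (j+y+1) = false, so c j = false, but c (j+y) must be true: contradiction
        have h2' : extWord m t s.1 ⟨j + y + 1, h⟩ = false := by
          rw [extWord_ge s.1 (show ¬ ((⟨j + y + 1, h⟩ : Fin m) : ℕ) < t by first | omega | (simp; omega))]
          simp only [decide_eq_false_iff_not]
          simpa using he
        have hcj : extWord m t s.1 ⟨j, by omega⟩ = false := by rw [← h2]; exact h2'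
        have hy' := h1 y hy1 le_rfl
        rw [hcj] at hy'
        simp only [Bool.not_false] at hy'
        by_cases hjy : j + y < t
        · rw [extWord_lt s.1 (show ((⟨j + y, by omega⟩ : Fin m) : ℕ) < t by simpa using hjy)] at hy'
          have hfin : (⟨j + y, by simpa using hjy⟩ : Fin t) = ⟨t - 1, by omega⟩ := by
            simp only [Fin.mk.injEq]; omega
          rw [hfin, s.2.2] at hy'
          exact Bool.false_ne_true hy'
        · rw [extWord_ge s.1 (show ¬ ((⟨j + y, by omega⟩ : Fin m) : ℕ) < t by simpa using hjy)] at hy'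
          simp only [decide_eq_true_eq] at hy'
          omega
  · -- extension has top bit true
    rw [extWord_ge s.1 (show ¬ ((⟨m - 1, by omega⟩ : Fin m) : ℕ) < t by first | omega | (simp; omega))]
    simp
  · -- extension has zeros at positions m-1-k, 1 ≤ k ≤ x+1
    intro k hk1 hk2
    by_cases hk : k ≤ x
    · rw [extWord_ge s.1 (show ¬ ((⟨m - 1 - k, by omega⟩ : Fin m) : ℕ) < t by first | omega | (simp; omega))]
      simp only [decide_eq_false_iff_not]
      first | omega | (simp; omega)
    · have hk' : k = x + 1 := by omega
      rw [extWord_lt s.1 (show ((⟨m - 1 - k, by omega⟩ : Fin m) : ℕ) < t by first | omega | (simp; omega))]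
      have hfin : (⟨m - 1 - k, by first | omega | (simp; omega)⟩ : Fin t) = ⟨t - 1, by omega⟩ := by
        simp only [Fin.mk.injEq]; omega
      rw [hfin]
      exact s.2.2
  · -- left inverse
    intro c
    apply Subtype.ext
    funext i
    show extWord m t (fun i => c.1 ⟨i, lt_of_lt_of_le i.isLt htm⟩) i = c.1 i
    by_cases hi : (i : ℕ) < t
    · rw [extWord_lt _ hi]
    · rw [extWord_ge _ hi]
      by_cases hie : (i : ℕ) = m - 1
      · have : i = ⟨m - 1, by omega⟩ := Fin.ext hie
        rw [this]
        simp [c.2.2.1]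
      · have hk := c.2.2.2 (m - 1 - (i : ℕ)) (by omega) (by omega)
        have hval : c.1 ⟨m - 1 - (m - 1 - (i : ℕ)), by omega⟩ = c.1 i :=
          congrArg c.1 (Fin.ext (show m - 1 - (m - 1 - (i : ℕ)) = (i : ℕ) by omega))
        rw [← hval, hk]
        simp only [decide_eq_false_iff_not]
        exact hie
  · -- right inverse
    intro s
    apply Subtype.ext
    funext i
    show extWord m t s.1 ⟨(i : ℕ), lt_of_lt_of_le i.isLt htm⟩ = s.1 i
    rw [extWord_lt s.1 (show ((⟨(i : ℕ), lt_of_lt_of_le i.isLt htm⟩ : Fin m) : ℕ) < t from i.isLt)]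

/-- For all `x ≥ 1` and `m ≥ x + 2`, twice the number of codewords of
`C(m, x)` starting from the left with `1` followed by `x + 1` zeros (Group 4)
is `N(m - x - 1, x)`. -/
theorem loco_group4_card (m x : ℕ) (hx : 1 ≤ x) (hm : x + 2 ≤ m) :
    2 * (Nat.card {c : Fin m → Bool // noForbidden m x c ∧
          c ⟨m - 1, by omega⟩ = true ∧
          ∀ k, 1 ≤ k → k ≤ x + 1 → c ⟨m - 1 - k, by omega⟩ = false} : ℤ)
      = Nex ((m : ℤ) - (x : ℤ) - 1) x := by
  have ht1 : 1 ≤ m - x - 1 := by omega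
  have hN : Nex ((m : ℤ) - (x : ℤ) - 1) x = (locoN (m - x - 1) x : ℤ) := by
    by_cases hc : (m : ℤ) - (x : ℤ) - 1 ≤ 1
    · have h01 : m - x - 1 = 1 := by omega
      rw [Nex, if_pos hc, h01, locoN_one]
      norm_num
    · rw [Nex, if_neg hc]
      have htn : ((m : ℤ) - (x : ℤ) - 1).toNat = m - x - 1 := by omega
      rw [htn]
  have h1 := group4_eq m x hx hm
  have h2 := locoN_split (m - x - 1) x ht1
  rw [hN, h1, h2]
  push_cast
  ring
end

section
/- For all integers x ≥ 1 and m ≥ 2x+1, if c′ ∈ C(m+1,x) starts, from the left, with 1^y 0^{x+1} for some y with 2 ≤ y ≤ x+1 (Group 3), and c denotes the binary word formed by the m rightmost bits of c′, then c ∈ C(m,x) and g(m+1,x,c′) = g(m,x,c) + N(m−x,x); that is, the shift in codeword indices for Group 3 is ζ₃ = N(m−x,x). -/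
lemma fcongr {n : ℕ} (d : Fin n → Bool) {a b : ℕ} (h1 : a < n) (h2 : b < n)
    (hab : a = b) : d ⟨a, h1⟩ = d ⟨b, h2⟩ := by subst hab; rfl

lemma bool_ne_iff {a b : Bool} : a ≠ b ↔ a = !b := by cases a <;> cases b <;> simp

lemma noForbidden_restrict {n k x : ℕ} (hk : k ≤ n) (d : Fin n → Bool)
    (hd : noForbidden n x d) :
    noForbidden k x (fun i : Fin k => d ⟨i.1, lt_of_lt_of_le i.2 hk⟩) := by
  intro j y hy1 hy2 h hC
  exact hd j y hy1 hy2 (by omega) ⟨fun kk hk1 hk2 => hC.1 kk hk1 hk2, hC.2⟩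

def ext1 (m : ℕ) (e : Fin m → Bool) : Fin (m+1) → Bool :=
  fun i => if h : (i : ℕ) < m then e ⟨i, h⟩
    else (if h2 : m - 1 < m then e ⟨m-1, h2⟩ else false)

lemma ext1_low (m : ℕ) (e : Fin m → Bool) (i : ℕ) (h : i < m) (h' : i < m+1) :
    ext1 m e ⟨i, h'⟩ = e ⟨i, h⟩ := by
  show (if h : i < m then e ⟨i, h⟩ else _) = _
  rw [dif_pos h]

lemma ext1_top (m : ℕ) (e : Fin m → Bool) (hm : 1 ≤ m) (h' : m < m+1) :
    ext1 m e ⟨m, h'⟩ = e ⟨m-1, by omega⟩ := by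
  show (if h : m < m then e ⟨m, h⟩ else _) = _
  rw [dif_neg (lt_irrefl m), dif_pos (by omega : m - 1 < m)]

def ext2a (m x : ℕ) (v : Fin (m-x) → Bool) : Bool :=
  if h : m - x - 1 < m - x then v ⟨m-x-1, h⟩ else false

def ext2 (m x : ℕ) (v : Fin (m-x) → Bool) : Fin (m+1) → Bool :=
  fun i => if h : (i:ℕ) < m - x then v ⟨i, h⟩
    else if (i:ℕ) = m then !(ext2a m x v) else ext2a m x v

lemma ext2_low (m x : ℕ) (v : Fin (m-x) → Bool) (i : ℕ) (h : i < m-x) (h' : i < m+1) :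
    ext2 m x v ⟨i, h'⟩ = v ⟨i, h⟩ := by
  show (if h : i < m - x then v ⟨i, h⟩ else _) = _
  rw [dif_pos h]

lemma ext2_mid (m x : ℕ) (hx : 1 ≤ x) (hm : 2*x+1 ≤ m) (v : Fin (m-x) → Bool)
    (i : ℕ) (hi1 : m-x-1 ≤ i) (hi2 : i ≤ m-1) (h' : i < m+1) :
    ext2 m x v ⟨i, h'⟩ = ext2a m x v := by
  show (if h : i < m - x then v ⟨i, h⟩ else if i = m then _ else _) = _
  by_cases hlow : i < m - x
  · rw [dif_pos hlow]
    show _ = if h : m - x - 1 < m - x then v ⟨m-x-1, h⟩ else false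
    rw [dif_pos (by omega : m - x - 1 < m - x)]
    exact fcongr v _ _ (by omega)
  · rw [dif_neg hlow, if_neg (by omega : ¬ i = m)]

lemma ext2_top (m x : ℕ) (hx : 1 ≤ x) (hm : 2*x+1 ≤ m) (v : Fin (m-x) → Bool) (h' : m < m+1) :
    ext2 m x v ⟨m, h'⟩ = !(ext2a m x v) := by
  show (if h : m < m - x then v ⟨m, h⟩ else if m = m then _ else _) = _
  rw [dif_neg (by omega : ¬ m < m - x), if_pos rfl]

lemma ext1_noForbidden (m x : ℕ) (hm : 1 ≤ m) (e : Fin m → Bool)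
    (he : noForbidden m x e) : noForbidden (m+1) x (ext1 m e) := by
  rintro j y hy1 hy2 h ⟨hmid, hend⟩
  by_cases hcase : j + y + 1 < m
  · refine he j y hy1 hy2 hcase ⟨?_, ?_⟩
    · intro k hk1 hk2
      have e1 := hmid k hk1 hk2
      rwa [ext1_low m e (j+k) (by omega), ext1_low m e j (by omega)] at e1
    · have e2 := hend
      rwa [ext1_low m e (j+y+1) (by omega), ext1_low m e j (by omega)] at e2
  · have hje : j + y + 1 = m := by omega
    have h1 := hmid y hy1 (le_refl y)
    rw [ext1_low m e (j+y) (by omega), ext1_low m e j (by omega)] at h1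
    have h2 := hend
    have hA : ext1 m e ⟨j+y+1, h⟩ = e ⟨m-1, by omega⟩ := by
      rw [fcongr (ext1 m e) h (by omega) hje, ext1_top m e hm]
    rw [hA, ext1_low m e j (by omega)] at h2
    have h3 : e ⟨m-1, by omega⟩ = ! e ⟨j, by omega⟩ := by
      rw [← h1]; exact fcongr e _ _ (by omega)
    rw [h3] at h2
    simp at h2

lemma forced_run (m x : ℕ) (hm : x + 1 ≤ m) (d : Fin (m+1) → Bool)
    (hd : noForbidden (m+1) x d)
    (hne : d ⟨m, by omega⟩ ≠ d ⟨m-1, by omega⟩) :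
    ∀ k, k ≤ x → d ⟨m-1-k, by omega⟩ = !(d ⟨m, by omega⟩) := by
  intro k
  induction k using Nat.strong_induction_on with
  | _ k ih =>
    intro hk
    rcases Nat.eq_zero_or_pos k with rfl | hk0
    · exact bool_ne_iff.mp (Ne.symm hne)
    · by_contra hcon
      have hb : d ⟨m-1-k, by omega⟩ = d ⟨m, by omega⟩ := by
        revert hcon
        cases h1 : d ⟨m-1-k, by omega⟩ <;> cases h2 : d ⟨m, by omega⟩ <;> simp_all
      refine hd (m-1-k) k hk0 hk (by omega) ⟨?_, ?_⟩
      · intro kk hkk1 hkk2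
        have hih := ih (k - kk) (by omega) (by omega)
        rw [hb, ← hih]
        exact fcongr d _ _ (by omega)
      · rw [hb]
        exact fcongr d _ _ (by omega)

lemma ext2_noForbidden (m x : ℕ) (hx : 1 ≤ x) (hm : 2*x+1 ≤ m) (v : Fin (m-x) → Bool)
    (hv : noForbidden (m-x) x v) : noForbidden (m+1) x (ext2 m x v) := by
  rintro j y hy1 hy2 h ⟨hmid, hend⟩
  by_cases hc1 : j + y + 1 < m - x
  · refine hv j y hy1 hy2 hc1 ⟨?_, ?_⟩
    · intro k hk1 hk2
      have e1 := hmid k hk1 hk2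
      rwa [ext2_low m x v (j+k) (by omega), ext2_low m x v j (by omega)] at e1
    · have e2 := hend
      rwa [ext2_low m x v (j+y+1) (by omega), ext2_low m x v j (by omega)] at e2
  · by_cases hc2 : j + y + 1 = m
    · have h2 := hend
      have hA : ext2 m x v ⟨j+y+1, h⟩ = !(ext2a m x v) := by
        rw [fcongr (ext2 m x v) h (by omega) hc2, ext2_top m x hx hm v]
      have hB : ext2 m x v ⟨j, by omega⟩ = ext2a m x v :=
        ext2_mid m x hx hm v j (by omega) (by omega) (by omega)
      rw [hA, hB] at h2
      simp at h2
    · have hj1 : ext2 m x v ⟨j+y+1, h⟩ = ext2a m x v :=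
        ext2_mid m x hx hm v (j+y+1) (by omega) (by omega) h
      have hend' := hend
      rw [hj1] at hend'
      have hjy := hmid y hy1 le_rfl
      have hjy2 : ext2 m x v ⟨j+y, by omega⟩ = ext2a m x v :=
        ext2_mid m x hx hm v (j+y) (by omega) (by omega) (by omega)
      rw [hjy2, ← hend'] at hjy
      simp at hjy

lemma ext1_lt (m : ℕ) (hm : 1 ≤ m) (c' : Fin (m+1) → Bool)
    (hc'm : c' ⟨m, by omega⟩ = true)
    (e : Fin m → Bool)
    (hlt : lexLt m e (fun i => c' (Fin.castSucc i))) :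
    lexLt (m+1) (ext1 m e) c' := by
  by_cases htop : e ⟨m-1, by omega⟩ = true
  · obtain ⟨i, hi0, hi1, hagree⟩ := hlt
    refine ⟨⟨i.1, by omega⟩, ?_, hi1, ?_⟩
    · show ext1 m e ⟨i.1, _⟩ = false
      rw [ext1_low m e i.1 i.2]
      exact hi0
    · intro j hj
      by_cases hjm : j.1 < m
      · have hag := hagree ⟨j.1, hjm⟩ hj
        have hj_eq : ext1 m e j = e ⟨j.1, hjm⟩ := ext1_low m e j.1 hjm j.2
        rw [hj_eq]; exact hag
      · have hjm' : j.1 = m := by omega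
        rw [show j = (⟨m, by omega⟩ : Fin (m+1)) from Fin.ext hjm']
        rw [ext1_top m e hm, htop, hc'm]
  · have htop' : e ⟨m-1, by omega⟩ = false := by
      revert htop; cases e ⟨m-1, by omega⟩ <;> simp
    refine ⟨⟨m, by omega⟩, ?_, hc'm, ?_⟩
    · show ext1 m e ⟨m, _⟩ = false
      rw [ext1_top m e hm]
      exact htop'
    · intro j hj
      have h1 : m < (j:ℕ) := hj
      exact absurd j.2 (by omega)

lemma restrict_lt (m : ℕ) (hm : 1 ≤ m) (c' d : Fin (m+1) → Bool)
    (hc'm1 : c' ⟨m-1, by omega⟩ = true)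
    (hde : d ⟨m, by omega⟩ = d ⟨m-1, by omega⟩)
    (hlt : lexLt (m+1) d c') :
    lexLt m (fun i => d (Fin.castSucc i)) (fun i => c' (Fin.castSucc i)) := by
  obtain ⟨i, hi0, hi1, hagree⟩ := hlt
  by_cases him : i.1 < m
  · refine ⟨⟨i.1, him⟩, hi0, hi1, ?_⟩
    intro j hj
    exact hagree ⟨j.1, by omega⟩ hj
  · have him' : i.1 = m := by omega
    refine ⟨⟨m-1, by omega⟩, ?_, hc'm1, ?_⟩
    · show d ⟨m-1, _⟩ = false
      rw [← hde, show (⟨m, by omega⟩ : Fin (m+1)) = i from Fin.ext him'.symm]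
      exact hi0
    · intro j hj
      have h1 : m - 1 < (j:ℕ) := hj
      exact absurd j.2 (by omega)

lemma ext2_lt (m x : ℕ) (hx : 1 ≤ x) (hm : 2*x+1 ≤ m) (c' : Fin (m+1) → Bool)
    (hc'm : c' ⟨m, by omega⟩ = true) (hc'm1 : c' ⟨m-1, by omega⟩ = true)
    (v : Fin (m-x) → Bool) :
    lexLt (m+1) (ext2 m x v) c' := by
  by_cases ha : ext2a m x v = true
  · refine ⟨⟨m, by omega⟩, ?_, hc'm, ?_⟩
    · rw [ext2_top m x hx hm v, ha]; rfl
    · intro j hj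
      have h1 : m < (j:ℕ) := hj
      exact absurd j.2 (by omega)
  · have ha' : ext2a m x v = false := by
      revert ha; cases ext2a m x v <;> simp
    refine ⟨⟨m-1, by omega⟩, ?_, hc'm1, ?_⟩
    · rw [ext2_mid m x hx hm v (m-1) (by omega) le_rfl (by omega)]
      exact ha'
    · intro j hj
      have h1 : m - 1 < (j:ℕ) := hj
      have hj' : j.1 = m := by omega
      rw [show j = (⟨m, by omega⟩ : Fin (m+1)) from Fin.ext hj']
      rw [ext2_top m x hx hm v, hc'm, ha']
      rfl

lemma restr_ext1 (m : ℕ) (e : Fin m → Bool) :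
    (fun i : Fin m => ext1 m e (Fin.castSucc i)) = e := by
  funext i
  exact ext1_low m e i.1 i.2 (by omega)

lemma ext1_restr (m : ℕ) (hm : 1 ≤ m) (d : Fin (m+1) → Bool)
    (hd : d ⟨m, by omega⟩ = d ⟨m-1, by omega⟩) :
    ext1 m (fun i => d (Fin.castSucc i)) = d := by
  funext i
  by_cases him : i.1 < m
  · have := ext1_low m (fun i : Fin m => d (Fin.castSucc i)) i.1 him i.2
    rw [show (⟨i.1, i.2⟩ : Fin (m+1)) = i from Fin.ext rfl] at this
    rw [this]
    rfl
  · have him' : i.1 = m := by omega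
    rw [show i = (⟨m, by omega⟩ : Fin (m+1)) from Fin.ext him']
    rw [ext1_top m (fun i : Fin m => d (Fin.castSucc i)) hm]
    show d (Fin.castSucc ⟨m-1, _⟩) = d ⟨m, _⟩
    have h2 : d (Fin.castSucc (⟨m-1, by omega⟩ : Fin m)) = d ⟨m-1, by omega⟩ :=
      congrArg d (Fin.ext rfl)
    rw [h2]
    exact hd.symm

lemma restr_ext2 (m x : ℕ) (hx : 1 ≤ x) (hm : 2*x+1 ≤ m) (v : Fin (m-x) → Bool) :
    (fun i : Fin (m-x) => ext2 m x v ⟨i.1, by omega⟩) = v := by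
  funext i
  exact ext2_low m x v i.1 i.2 (by omega)

lemma ext2a_restr (m x : ℕ) (hx : 1 ≤ x) (hm : 2*x+1 ≤ m) (d : Fin (m+1) → Bool)
    (hd : noForbidden (m+1) x d)
    (hne : d ⟨m, by omega⟩ ≠ d ⟨m-1, by omega⟩) :
    ext2a m x (fun i : Fin (m-x) => d ⟨i.1, by omega⟩) = !(d ⟨m, by omega⟩) := by
  show (if h : m-x-1 < m-x then d ⟨m-x-1, by omega⟩ else false) = _
  rw [dif_pos (by omega : m-x-1 < m-x)]
  have := forced_run m x (by omega) d hd hne x le_rfl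
  rw [← this]
  exact fcongr d _ _ (by omega)

lemma ext2_restr (m x : ℕ) (hx : 1 ≤ x) (hm : 2*x+1 ≤ m) (d : Fin (m+1) → Bool)
    (hd : noForbidden (m+1) x d)
    (hne : d ⟨m, by omega⟩ ≠ d ⟨m-1, by omega⟩) :
    ext2 m x (fun i : Fin (m-x) => d ⟨i.1, by omega⟩) = d := by
  have ha := ext2a_restr m x hx hm d hd hne
  funext i
  by_cases hlow : i.1 < m - x
  · have := ext2_low m x (fun i : Fin (m-x) => d ⟨i.1, by omega⟩) i.1 hlow i.2
    rw [show (⟨i.1, i.2⟩ : Fin (m+1)) = i from Fin.ext rfl] at this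
    rw [this]
  · by_cases htop : i.1 = m
    · rw [show i = (⟨m, by omega⟩ : Fin (m+1)) from Fin.ext htop]
      rw [ext2_top m x hx hm _ (by omega), ha]
      simp
    · have hmid : m-x-1 ≤ i.1 ∧ i.1 ≤ m-1 := by omega
      rw [show i = (⟨i.1, by omega⟩ : Fin (m+1)) from Fin.ext rfl]
      rw [ext2_mid m x hx hm _ i.1 hmid.1 hmid.2 (by omega), ha]
      have := forced_run m x (by omega) d hd hne (m-1-i.1) (by omega)
      rw [← this]
      exact fcongr d _ _ (by omega)

/-- For all `x ≥ 1` and `m ≥ 2x + 1`, if `c' ∈ C(m + 1, x)` starts from the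
left with `1^y 0^{x+1}` for some `2 ≤ y ≤ x + 1` (Group 3), and `c` is the word formed by the
`m` rightmost bits of `c'`, then `c ∈ C(m, x)` and
`g(m + 1, x, c') = g(m, x, c) + N(m - x, x)`, i.e. the index shift is `ζ₃ = N(m - x, x)`. -/
theorem loco_group3_shift (m x : ℕ) (hx : 1 ≤ x) (hm : 2 * x + 1 ≤ m)
    (c' : Fin (m + 1) → Bool) (hc' : noForbidden (m + 1) x c')
    (hy : ∃ y, 2 ≤ y ∧ y ≤ x + 1 ∧
      (∀ k, k < y → c' ⟨m - k, by omega⟩ = true) ∧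
      (∀ k, y ≤ k → k ≤ y + x → c' ⟨m - k, by omega⟩ = false)) :
    noForbidden m x (fun i => c' (Fin.castSucc i)) ∧
    (locoIdx (m + 1) x c' : ℤ)
      = (locoIdx m x (fun i => c' (Fin.castSucc i)) : ℤ) + Nex ((m : ℤ) - (x : ℤ)) x := by
  classical
  obtain ⟨y, hy2, hyx, hones, hzeros⟩ := hy
  have hc'm : c' ⟨m, by omega⟩ = true := hones 0 (by omega)
  have hc'm1 : c' ⟨m - 1, by omega⟩ = true := hones 1 (by omega)
  have hm1 : 1 ≤ m := by omega
  have hcnf : noForbidden m x (fun i => c' (Fin.castSucc i)) :=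
    noForbidden_restrict (Nat.le_succ m) c' hc'
  refine ⟨hcnf, ?_⟩
  have E1 : {d : Fin (m+1) → Bool //
        (fun d => noForbidden (m+1) x d ∧ lexLt (m+1) d c') d ∧
        (fun d : Fin (m+1) → Bool => d ⟨m, by omega⟩ = d ⟨m-1, by omega⟩) d}
      ≃ {e : Fin m → Bool // noForbidden m x e ∧ lexLt m e (fun i => c' (Fin.castSucc i))} :=
    { toFun := fun p => ⟨fun i => p.1 (Fin.castSucc i),
        noForbidden_restrict (Nat.le_succ m) p.1 p.2.1.1,
        restrict_lt m hm1 c' p.1 hc'm1 p.2.2 p.2.1.2⟩,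
      invFun := fun q => ⟨ext1 m q.1,
        ⟨⟨ext1_noForbidden m x hm1 q.1 q.2.1, ext1_lt m hm1 c' hc'm q.1 q.2.2⟩, by
          show ext1 m q.1 ⟨m, _⟩ = ext1 m q.1 ⟨m-1, _⟩
          rw [ext1_top m q.1 hm1, ext1_low m q.1 (m-1) (by omega)]⟩⟩,
      left_inv := fun p => Subtype.ext (ext1_restr m hm1 p.1 p.2.2),
      right_inv := fun q => Subtype.ext (restr_ext1 m q.1) }
  have E2 : {d : Fin (m+1) → Bool //
        (fun d => noForbidden (m+1) x d ∧ lexLt (m+1) d c') d ∧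
        ¬ (fun d : Fin (m+1) → Bool => d ⟨m, by omega⟩ = d ⟨m-1, by omega⟩) d}
      ≃ {v : Fin (m-x) → Bool // noForbidden (m-x) x v} :=
    { toFun := fun p => ⟨fun i : Fin (m-x) => p.1 ⟨i.1, by omega⟩,
        noForbidden_restrict (by omega) p.1 p.2.1.1⟩,
      invFun := fun q => ⟨ext2 m x q.1,
        ⟨⟨ext2_noForbidden m x hx hm q.1 q.2, ext2_lt m x hx hm c' hc'm hc'm1 q.1⟩, by
          show ¬ (ext2 m x q.1 ⟨m, _⟩ = ext2 m x q.1 ⟨m-1, _⟩)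
          rw [ext2_top m x hx hm q.1,
            ext2_mid m x hx hm q.1 (m-1) (by omega) le_rfl (by omega)]
          simp⟩⟩,
      left_inv := fun p => Subtype.ext (ext2_restr m x hx hm p.1 p.2.1.1 p.2.2),
      right_inv := fun q => Subtype.ext (restr_ext2 m x hx hm q.1) }
  have e0 : {d : Fin (m+1) → Bool // noForbidden (m+1) x d ∧ lexLt (m+1) d c'}
      ≃ ({e : Fin m → Bool // noForbidden m x e ∧ lexLt m e (fun i => c' (Fin.castSucc i))}
          ⊕ {v : Fin (m-x) → Bool // noForbidden (m-x) x v}) :=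
    ((Equiv.sumCompl (fun s : {d : Fin (m+1) → Bool //
        noForbidden (m+1) x d ∧ lexLt (m+1) d c'} =>
          s.1 ⟨m, by omega⟩ = s.1 ⟨m-1, by omega⟩)).symm.trans
      (Equiv.sumCongr
        ((Equiv.subtypeSubtypeEquivSubtypeInter
            (fun d => noForbidden (m+1) x d ∧ lexLt (m+1) d c')
            (fun d : Fin (m+1) → Bool => d ⟨m, by omega⟩ = d ⟨m-1, by omega⟩)).trans E1)
        ((Equiv.subtypeSubtypeEquivSubtypeInter
            (fun d => noForbidden (m+1) x d ∧ lexLt (m+1) d c')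
            (fun d : Fin (m+1) → Bool => ¬ (d ⟨m, by omega⟩ = d ⟨m-1, by omega⟩))).trans E2)))
  have key : locoIdx (m+1) x c'
      = locoIdx m x (fun i => c' (Fin.castSucc i)) + locoN (m-x) x := by
    unfold locoIdx locoN
    rw [Nat.card_congr e0, Nat.card_sum]
  rw [key]
  have ht : ((m:ℤ) - (x:ℤ)).toNat = m - x := by omega
  have hNex : Nex ((m:ℤ) - (x:ℤ)) x = (locoN (m-x) x : ℤ) := by
    unfold Nex
    rw [if_neg (by omega : ¬ ((m:ℤ) - (x:ℤ) ≤ 1)), ht]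
  rw [hNex]
  push_cast
  ring
end
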